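/- Let G be a group, F and A finite subsets of G with identity issues ignored, and suppose T̃ ⊆ A satisfies |T̃|/|A| > 1 − δ for some δ ∈ (0,1). Define T = {t ∈ T̃ : F·t ⊆ T̃}. Then |A \ T| ≤ ∑_{g∈F} (|gA \ A| + |A \ T̃|) + |A \ T̃|; in particular if |gA \ A| ≤ δ|A| for every g ∈ F, then |A \ T| ≤ (2|F| + 1)·δ·|A|. -/
import Mathlib


open Finset Pointwise

/-- let `F, A` be finite subsets of a group `G`, `T̃ ⊆ A` with
`|T̃| > (1-δ)|A|`, and `T = {t ∈ T̃ : F·t ⊆ T̃}`.  Then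
`|A \ T| ≤ ∑_{g∈F} (|gA \ A| + |A \ T̃|) + |A \ T̃|`; in particular, if `|gA \ A| ≤ δ|A|`
for every `g ∈ F`, then `|A \ T| ≤ (2|F|+1) δ |A|`. -/
theorem tile_core_bound {G : Type*} [Group G] [DecidableEq G]
    (F A T' : Finset G) (δ : ℝ) (hδ0 : 0 < δ) (hδ1 : δ < 1)
    (hT'A : T' ⊆ A) (hT'card : (1 - δ) * (A.card : ℝ) < (T'.card : ℝ)) :
    (((A \ T'.filter (fun t => ∀ g ∈ F, g * t ∈ T')).card : ℝ)
        ≤ (∑ g ∈ F, (((A.image (fun a => g * a)) \ A).card + ((A \ T').card : ℝ)))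
            + ((A \ T').card : ℝ))
    ∧ ((∀ g ∈ F, (((A.image (fun a => g * a)) \ A).card : ℝ) ≤ δ * (A.card : ℝ)) →
        ((A \ T'.filter (fun t => ∀ g ∈ F, g * t ∈ T')).card : ℝ)
          ≤ (2 * (F.card : ℝ) + 1) * δ * (A.card : ℝ)) := by
  classical
  set T : Finset G := T'.filter (fun t => ∀ g ∈ F, g * t ∈ T') with hT
  set S : G → Finset G := fun g => A.filter (fun a => g * a ∉ T') with hS
  -- per-g bound
  have hSbound : ∀ g ∈ F, ((S g).card : ℝ)
      ≤ (((A.image (fun a => g * a)) \ A).card : ℝ) + ((A \ T').card : ℝ) := by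
    intro g _
    have hinj : Set.InjOn (fun a => g * a) (S g : Set G) := fun x _ y _ h => by
      simpa using mul_left_cancel h
    have himg : (S g).image (fun a => g * a)
        ⊆ ((A.image (fun a => g * a)) \ A) ∪ (A \ T') := by
      intro x hx
      simp only [mem_image] at hx
      obtain ⟨a, ha, rfl⟩ := hx
      simp only [hS, mem_filter] at ha
      by_cases hxa : g * a ∈ A
      · exact mem_union_right _ (mem_sdiff.2 ⟨hxa, ha.2⟩)
      · exact mem_union_left _ (mem_sdiff.2 ⟨mem_image_of_mem _ ha.1, hxa⟩)
    have h1 : (S g).card = ((S g).image (fun a => g * a)).card :=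
      (Finset.card_image_of_injOn hinj).symm
    have h2 : ((S g).image (fun a => g * a)).card
        ≤ (((A.image (fun a => g * a)) \ A) ∪ (A \ T')).card :=
      Finset.card_le_card himg
    have h3 := Finset.card_union_le ((A.image (fun a => g * a)) \ A) (A \ T')
    have : (S g).card ≤ (((A.image (fun a => g * a)) \ A)).card + (A \ T').card := by
      omega
    exact_mod_cast this
  -- covering
  have hcover : A \ T ⊆ (A \ T') ∪ F.biUnion S := by
    intro a ha
    rw [mem_sdiff] at ha
    by_cases haT' : a ∈ T'
    · have : ¬ (∀ g ∈ F, g * a ∈ T') := fun h => ha.2 (mem_filter.2 ⟨haT', h⟩)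
      push_neg at this
      obtain ⟨g, hg, hga⟩ := this
      exact mem_union_right _ (mem_biUnion.2 ⟨g, hg, mem_filter.2 ⟨ha.1, hga⟩⟩)
    · exact mem_union_left _ (mem_sdiff.2 ⟨ha.1, haT'⟩)
  have hmain : ((A \ T).card : ℝ)
      ≤ (∑ g ∈ F, (((A.image (fun a => g * a)) \ A).card + ((A \ T').card : ℝ)))
          + ((A \ T').card : ℝ) := by
    have h1 : (A \ T).card ≤ ((A \ T') ∪ F.biUnion S).card := Finset.card_le_card hcover
    have h2 := Finset.card_union_le (A \ T') (F.biUnion S)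
    have h3 := Finset.card_biUnion_le (s := F) (t := S)
    have h4 : ((A \ T).card : ℝ) ≤ ((A \ T').card : ℝ) + ∑ g ∈ F, ((S g).card : ℝ) := by
      push_cast
      have : (A \ T).card ≤ (A \ T').card + ∑ g ∈ F, (S g).card := by omega
      exact_mod_cast this
    calc ((A \ T).card : ℝ)
        ≤ ((A \ T').card : ℝ) + ∑ g ∈ F, ((S g).card : ℝ) := h4
      _ ≤ ((A \ T').card : ℝ)
          + ∑ g ∈ F, ((((A.image (fun a => g * a)) \ A).card : ℝ) + ((A \ T').card : ℝ)) := by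
          gcongr with g hg
          exact hSbound g hg
      _ = _ := by ring
  refine ⟨hmain, fun hsmall => ?_⟩
  have hAT' : ((A \ T').card : ℝ) ≤ δ * A.card := by
    have hcard : ((A \ T').card : ℝ) = (A.card : ℝ) - T'.card := by
      rw [Finset.card_sdiff_of_subset hT'A]
      have := Finset.card_le_card hT'A
      push_cast [Nat.cast_sub this]
      ring
    rw [hcard]
    nlinarith
  calc ((A \ T).card : ℝ)
      ≤ (∑ g ∈ F, (((A.image (fun a => g * a)) \ A).card + ((A \ T').card : ℝ)))
          + ((A \ T').card : ℝ) := hmain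
    _ ≤ (∑ g ∈ F, (δ * A.card + δ * A.card)) + δ * A.card := by
        have hsum : (∑ g ∈ F, (((A.image (fun a => g * a)) \ A).card + ((A \ T').card : ℝ)))
            ≤ ∑ g ∈ F, (δ * A.card + δ * A.card) :=
          Finset.sum_le_sum fun g hg => add_le_add (hsmall g hg) hAT'
        linarith
    _ = (2 * (F.card : ℝ) + 1) * δ * A.card := by
        rw [Finset.sum_const]
        push_cast
        ring
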